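/- With |H_n^p| the Hankel determinants of c (c_0=1, c_{3n}=c_n, c_{3n+1}=Jc_n, c_{3n+2}=0, J=(i√3−1)/2) and |Σ_n^p| the Hankel determinants of s_n = c_n+c_{n+1}: for all n ≥ 1 and p ≥ 0, det H_{3n}^{3p} = (−1)^n · det H_n^p · det H_n^{p+1} · det Σ_n^p. -/

import Mathlib

open Matrix

noncomputable def Hmat (u : ℕ → ℂ) (p n : ℕ) : Matrix (Fin n) (Fin n) ℂ :=
  Matrix.of fun i j => u (p + i + j)

/-- Interleaving equivalence: `(r, a) ↦ 3a + r`. -/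
noncomputable def e3 (n : ℕ) : (Fin n ⊕ (Fin n ⊕ Fin n)) ≃ Fin (3 * n) :=
  Equiv.ofBijective
    (Sum.elim (fun a => ⟨3 * a.1, by omega⟩)
      (Sum.elim (fun a => ⟨3 * a.1 + 1, by omega⟩) (fun a => ⟨3 * a.1 + 2, by omega⟩)))
    (by
      rw [Fintype.bijective_iff_injective_and_card]
      constructor
      · rintro (x | x | x) (y | y | y) h <;>
          simp only [Sum.elim_inl, Sum.elim_inr, Fin.mk.injEq] at h <;>
          first
            | (congr 1; exact Fin.ext (by omega))
            | (congr 2; exact Fin.ext (by omega))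
            | omega
      · simp; omega)

theorem stmt6 (J : ℂ) (hJ : J = (Complex.I * Real.sqrt 3 - 1) / 2)
    (c : ℕ → ℂ) (hc0 : c 0 = 1)
    (hc3 : ∀ n, c (3 * n) = c n)
    (hc31 : ∀ n, c (3 * n + 1) = J * c n)
    (hc32 : ∀ n, c (3 * n + 2) = 0)
    (s : ℕ → ℂ) (hs : ∀ n, s n = c n + c (n + 1)) :
    ∀ n p : ℕ, 1 ≤ n →
      (Hmat c (3 * p) (3 * n)).det =
        (-1) ^ n * (Hmat c p n).det * (Hmat c (p + 1) n).det * (Hmat s p n).det := by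
  -- J is a primitive cube root of unity
  have hsq : (Real.sqrt 3 : ℂ) ^ 2 = 3 := by
    rw [← Complex.ofReal_pow, Real.sq_sqrt (by norm_num : (3:ℝ) ≥ 0)]; norm_num
  have hJ3 : J ^ 3 = 1 := by
    rw [hJ]; field_simp; ring_nf
    rw [Complex.I_sq]
    ring_nf
    rw [show (Real.sqrt 3 : ℂ) ^ 3 = (Real.sqrt 3 : ℂ) ^ 2 * (Real.sqrt 3 : ℂ) by ring, hsq]
    ring_nf
    rw [show Complex.I ^ 3 = -Complex.I by rw [pow_succ, Complex.I_sq]; ring]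
    ring
  intro n p _
  set A := Hmat c p n with hA
  set B := Hmat c (p + 1) n with hB
  -- the Σ matrix is A + B
  have hS : Hmat s p n = A + B := by
    ext i j
    simp only [Hmat, hA, hB, Matrix.add_apply, Matrix.of_apply]
    rw [hs]
    congr 2
    omega
  -- blocks
  set W : Matrix (Fin n ⊕ (Fin n ⊕ Fin n)) (Fin n ⊕ (Fin n ⊕ Fin n)) ℂ :=
    fromBlocks A 0 (fromRows (J • A) 0) (fromBlocks ((-(J ^ 2)) • (A + B)) B 0 (J • B)) with hW
  set V : Matrix (Fin n ⊕ (Fin n ⊕ Fin n)) (Fin n ⊕ (Fin n ⊕ Fin n)) ℂ :=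
    fromBlocks 1 (fromCols (J • 1) 0) 0 (fromBlocks 1 0 ((J ^ 2) • 1) 1) with hV
  set Mid : Matrix (Fin n ⊕ (Fin n ⊕ Fin n)) (Fin n ⊕ (Fin n ⊕ Fin n)) ℂ :=
    fromBlocks A (fromCols (J • A) 0) (fromRows (J • A) 0) (fromBlocks 0 B B (J • B))
    with hMid
  -- step 1: the reindexed Hankel matrix is Mid
  have hM : (Hmat c (3 * p) (3 * n)).submatrix (e3 n) (e3 n) = Mid := by
    ext i j
    rcases i with a | a | a <;> rcases j with b | b | b <;>
      simp only [Matrix.submatrix_apply, e3, Equiv.ofBijective_apply, Sum.elim_inl,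
        Sum.elim_inr, Hmat, Matrix.of_apply, Fin.val_mk, hMid, Matrix.fromBlocks_apply₁₁,
        Matrix.fromBlocks_apply₁₂, Matrix.fromBlocks_apply₂₁, Matrix.fromBlocks_apply₂₂,
        Matrix.fromCols, Matrix.fromRows, Matrix.smul_apply, smul_eq_mul,
        Matrix.zero_apply]
    · rw [show 3 * p + 3 * (a:ℕ) + 3 * (b:ℕ) = 3 * (p + a + b) by ring, hc3]
      simp [hA, Hmat]
    · rw [show 3 * p + 3 * (a:ℕ) + (3 * (b:ℕ) + 1) = 3 * (p + a + b) + 1 by ring, hc31]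
      simp [hA, Hmat]
    · rw [show 3 * p + 3 * (a:ℕ) + (3 * (b:ℕ) + 2) = 3 * (p + a + b) + 2 by ring, hc32]
    · rw [show 3 * p + (3 * (a:ℕ) + 1) + 3 * (b:ℕ) = 3 * (p + a + b) + 1 by ring, hc31]
      simp [hA, Hmat]
      rfl
    · rw [show 3 * p + (3 * (a:ℕ) + 1) + (3 * (b:ℕ) + 1) = 3 * (p + a + b) + 2 by ring, hc32]
    · rw [show 3 * p + (3 * (a:ℕ) + 1) + (3 * (b:ℕ) + 2) = 3 * (p + 1 + a + b) by ring, hc3]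
      simp [hB, Hmat]
    · rw [show 3 * p + (3 * (a:ℕ) + 2) + 3 * (b:ℕ) = 3 * (p + a + b) + 2 by ring, hc32]
      rfl
    · rw [show 3 * p + (3 * (a:ℕ) + 2) + (3 * (b:ℕ) + 1) = 3 * (p + 1 + a + b) by ring, hc3]
      simp [hB, Hmat]
    · rw [show 3 * p + (3 * (a:ℕ) + 2) + (3 * (b:ℕ) + 2) = 3 * (p + 1 + a + b) + 1 by ring,
        hc31]
      simp [hB, Hmat]
  -- step 2: Mid = W * V (pure block algebra)
  have hMV : W * V = Mid := by
    rw [hW, hV, hMid, Matrix.fromBlocks_multiply, Matrix.mul_fromCols,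
      Matrix.fromRows_mul_fromCols, Matrix.fromBlocks_multiply, Matrix.fromBlocks_add]
    ext i j
    rcases i with i | i | i <;> rcases j with j | j | j <;>
      simp only [Matrix.fromBlocks_apply₁₁, Matrix.fromBlocks_apply₁₂,
        Matrix.fromBlocks_apply₂₁, Matrix.fromBlocks_apply₂₂,
        Matrix.fromRows_apply_inl, Matrix.fromRows_apply_inr,
        Matrix.fromCols_apply_inl, Matrix.fromCols_apply_inr,
        Matrix.mul_smul, Matrix.smul_mul, Matrix.mul_one, Matrix.one_mul,
        Matrix.mul_zero, Matrix.zero_mul, add_zero, zero_add, smul_zero, zero_smul,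
        Matrix.add_apply, Matrix.smul_apply, smul_eq_mul, Matrix.zero_apply,
        Matrix.neg_apply] <;>
      first
        | rfl
        | ring1
        | linear_combination (B i j) * hJ3
  -- put it all together
  have hdet : (Hmat c (3 * p) (3 * n)).det = W.det * V.det := by
    rw [← Matrix.det_mul, hMV, ← hM, Matrix.det_submatrix_equiv_self]
  have hVdet : V.det = 1 := by
    rw [hV, Matrix.det_fromBlocks_zero₂₁, Matrix.det_fromBlocks_zero₁₂]
    simp
  have hWdet : W.det = A.det * (((-(J ^ 2)) ^ n * (A + B).det) * (J ^ n * B.det)) := by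
    rw [hW, Matrix.det_fromBlocks_zero₁₂, Matrix.det_fromBlocks_zero₂₁,
      Matrix.det_smul, Matrix.det_smul]
    simp
  rw [hdet, hVdet, hWdet, hS, mul_one]
  have key : (-(J ^ 2)) ^ n * J ^ n = (-1) ^ n := by
    rw [← mul_pow, show -J ^ 2 * J = -1 * J ^ 3 by ring, hJ3, mul_one]
  calc A.det * ((-(J ^ 2)) ^ n * (A + B).det * (J ^ n * B.det))
      = ((-(J ^ 2)) ^ n * J ^ n) * A.det * B.det * (A + B).det := by ring
    _ = (-1) ^ n * A.det * B.det * (A + B).det := by rw [key]
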